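/- Let q : F → E and p : E → B be latent fibrations between restriction categories. Then the composite restriction semifunctor q followed by p, from F to B, is a latent fibration. -/

import Mathlib

open CategoryTheory

universe v₁ u₁ v₂ u₂ v₃ u₃

/-- A restriction category: a category equipped with a restriction combinator
satisfying the four restriction axioms [R.1]–[R.4]. -/
class RestrictionCategory (C : Type u₁) [Category.{v₁} C] where
  rest : ∀ {A B : C}, (A ⟶ B) → (A ⟶ A)
  rest_comp_self : ∀ {A B : C} (f : A ⟶ B), rest f ≫ f = f
  rest_comm : ∀ {A B C' : C} (f : A ⟶ B) (g : A ⟶ C'), rest f ≫ rest g = rest g ≫ rest f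
  rest_rest_comp : ∀ {A B C' : C} (f : A ⟶ B) (g : A ⟶ C'),
    rest (rest f ≫ g) = rest f ≫ rest g
  comp_rest : ∀ {A B C' : C} (f : A ⟶ B) (g : B ⟶ C'),
    f ≫ rest g = rest (f ≫ g) ≫ f

open RestrictionCategory

/-- A restriction semifunctor: preserves composition and restriction
(but not necessarily identities). -/
structure RestrictionSemifunctor (E : Type u₁) (B : Type u₂) [Category.{v₁} E]
    [Category.{v₂} B] [RestrictionCategory E] [RestrictionCategory B] where
  obj : E → B
  map : ∀ {X Y : E}, (X ⟶ Y) → (obj X ⟶ obj Y)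
  map_comp : ∀ {X Y Z : E} (f : X ⟶ Y) (g : Y ⟶ Z), map (f ≫ g) = map f ≫ map g
  map_rest : ∀ {X Y : E} (f : X ⟶ Y), map (rest f) = rest (map f)

variable {E : Type u₁} {B : Type u₂} [Category.{v₁} E] [Category.{v₂} B]
  [RestrictionCategory E] [RestrictionCategory B]

/-- A morphism `f' : X' ⟶ X` is `p`-prone if every precise triangle
`h ≫ p(f') = p(g)` in the base has a unique precise lifting. -/
def RestrictionSemifunctor.IsProne (p : RestrictionSemifunctor E B) {X' X : E}
    (f' : X' ⟶ X) : Prop :=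
  ∀ (Y : E) (g : Y ⟶ X) (h : p.obj Y ⟶ p.obj X'),
    h ≫ p.map f' = p.map g → rest h = rest (p.map g) →
    ∃! ht : Y ⟶ X', p.map ht = h ∧ ht ≫ f' = g ∧ rest ht = rest g

/-- A restriction semifunctor `p : E → B` is a latent fibration if every
`f : A ⟶ p(X)` in the base with `f ≫ p(𝟙 X) = f` has a p-prone morphism over it. -/
def RestrictionSemifunctor.IsLatentFibration (p : RestrictionSemifunctor E B) : Prop :=
  ∀ (X : E) (A : B) (f : A ⟶ p.obj X), f ≫ p.map (𝟙 X) = f →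
    ∃ (X' : E) (f' : X' ⟶ X) (hA : p.obj X' = A),
      p.IsProne f' ∧ p.map f' = eqToHom hA ≫ f

/-- Composition (in diagrammatic order) of restriction semifunctors. -/
def RestrictionSemifunctor.comp {F₀ : Type u₃} [Category.{v₃} F₀] [RestrictionCategory F₀]
    (q : RestrictionSemifunctor F₀ E) (p : RestrictionSemifunctor E B) :
    RestrictionSemifunctor F₀ B where
  obj Z := p.obj (q.obj Z)
  map f := p.map (q.map f)
  map_comp f g := by simp only [q.map_comp, p.map_comp]
  map_rest f := by simp only [q.map_rest, p.map_rest]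

private lemma rest_id' {C : Type*} [Category C] [RestrictionCategory C] (A : C) :
    rest (𝟙 A) = 𝟙 A := by
  simpa using rest_comp_self (𝟙 A)

/-- Latent fibrations are closed under composition. -/
theorem latentFibration_comp {F₀ : Type u₃} [Category.{v₃} F₀] [RestrictionCategory F₀]
    (q : RestrictionSemifunctor F₀ E) (p : RestrictionSemifunctor E B)
    (hq : q.IsLatentFibration) (hp : p.IsLatentFibration) :
    (q.comp p).IsLatentFibration := by
  intro X A f hf
  change A ⟶ p.obj (q.obj X) at f
  replace hf : f ≫ p.map (q.map (𝟙 X)) = f := hf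
  have hf' : f ≫ p.map (𝟙 (q.obj X)) = f := by
    calc f ≫ p.map (𝟙 (q.obj X))
        = (f ≫ p.map (q.map (𝟙 X))) ≫ p.map (𝟙 (q.obj X)) := by rw [hf]
      _ = f ≫ p.map (q.map (𝟙 X) ≫ 𝟙 (q.obj X)) := by
          rw [p.map_comp, Category.assoc]
      _ = f := by rw [Category.comp_id]; exact hf
  obtain ⟨X'', g', hA1, hproneP, hmapP⟩ := hp (q.obj X) A f hf'
  subst hA1
  rw [eqToHom_refl, Category.id_comp] at hmapP
  set e : q.obj X ⟶ q.obj X := q.map (𝟙 X) with he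
  have hee : e ≫ e = e := by rw [he, ← q.map_comp, Category.comp_id]
  have hfe : f ≫ p.map e = f := hf
  have hcond : (g' ≫ e) ≫ q.map (𝟙 X) = g' ≫ e := by
    rw [Category.assoc, ← he, hee]
  obtain ⟨X₃, f'', hA2, hproneQ, hmapQ⟩ := hq X X'' (g' ≫ e) hcond
  subst hA2
  rw [eqToHom_refl, Category.id_comp] at hmapQ
  have hPf : p.map (q.map f'') = f := by
    rw [hmapQ, p.map_comp, hmapP, hfe]
  refine ⟨X₃, f'', rfl, ?_, ?_⟩
  · -- proneness of f'' for q.comp p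
    intro Y g h hcomm hrest
    change p.obj (q.obj Y) ⟶ p.obj (q.obj X₃) at h
    replace hcomm : h ≫ p.map (q.map f'') = p.map (q.map g) := hcomm
    replace hrest : rest h = rest (p.map (q.map g)) := hrest
    have hcomm' : h ≫ p.map g' = p.map (q.map g) := by
      rw [hmapP]
      calc h ≫ f = h ≫ f ≫ p.map e := by rw [hfe]
        _ = h ≫ p.map (q.map f'') := by rw [hmapQ, p.map_comp, hmapP]
        _ = p.map (q.map g) := hcomm
    obtain ⟨k, ⟨hk1, hk2, hk3⟩, huk⟩ := hproneP (q.obj Y) (q.map g) h hcomm' hrest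
    have hge : q.map g ≫ e = q.map g := by rw [he, ← q.map_comp, Category.comp_id]
    have hk2' : k ≫ q.map f'' = q.map g := by
      rw [hmapQ, ← Category.assoc, hk2, hge]
    obtain ⟨ht, ⟨ht1, ht2, ht3⟩, huht⟩ := hproneQ Y g k hk2' hk3
    refine ⟨ht, ⟨?_, ht2, ht3⟩, ?_⟩
    · show p.map (q.map ht) = h
      rw [ht1, hk1]
    · rintro y ⟨hy1, hy2, hy3⟩
      replace hy1 : p.map (q.map y) = h := hy1
      have hrk₂ : rest (q.map y) = rest (q.map g) := by
        rw [← q.map_rest, hy3, q.map_rest]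
      have heRest : e = rest e := by rw [he, ← q.map_rest, rest_id']
      have h1 : (q.map y ≫ g') ≫ e = q.map g := by
        rw [Category.assoc, ← hmapQ, ← q.map_comp, hy2]
      have hk₂g' : q.map y ≫ g' = q.map g := by
        have hsym : q.map g = q.map y ≫ g' := by
          calc q.map g = (q.map y ≫ g') ≫ e := h1.symm
            _ = (q.map y ≫ g') ≫ rest e := by rw [← heRest]
            _ = rest ((q.map y ≫ g') ≫ e) ≫ (q.map y ≫ g') := comp_rest _ _
            _ = rest (q.map g) ≫ (q.map y ≫ g') := by rw [h1]
            _ = (rest (q.map y) ≫ q.map y) ≫ g' := by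
                rw [hrk₂, Category.assoc]
            _ = q.map y ≫ g' := by rw [rest_comp_self]
        exact hsym.symm
      have hk₂k : q.map y = k := huk (q.map y) ⟨hy1, hk₂g', hrk₂⟩
      exact huht y ⟨hk₂k, hy2, hy3⟩
  · show p.map (q.map f'') = eqToHom rfl ≫ f
    rw [eqToHom_refl, Category.id_comp, hPf]
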